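/- arXiv:2107.02474 — 4 statements merged into one kernel-verified Lean document; each statement's English description precedes it below -/
import Mathlib

section
/- Let α, β ∈ (0,1] and L_a, L_b ≥ 0 with L_a·L_b < 1. Then the symmetric 2×2 matrix [[1-α, √(α(1-α)β L_a L_b)], [√(α(1-α)β L_a L_b), 1-β+αβ L_a L_b]] has all eigenvalues strictly less than 1 (i.e., I minus this matrix is positive definite). -/
open Matrix

/-- For `α, β ∈ (0,1]` and `L_a, L_b ≥ 0` with `L_a L_b < 1`, the symmetric matrix
`[[1-α, √(α(1-α)β L_a L_b)], [√(α(1-α)β L_a L_b), 1-β+αβ L_a L_b]]` has all eigenvalues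
strictly less than 1, i.e. `I` minus this matrix is positive definite. -/
theorem stmt_8 (α β La Lb : ℝ)
    (hα0 : 0 < α) (hα1 : α ≤ 1) (hβ0 : 0 < β) (hβ1 : β ≤ 1)
    (hLa : 0 ≤ La) (hLb : 0 ≤ Lb) (hLab : La * Lb < 1) :
    ((1 : Matrix (Fin 2) (Fin 2) ℝ) -
        !![1 - α, Real.sqrt (α * (1 - α) * β * La * Lb);
           Real.sqrt (α * (1 - α) * β * La * Lb), 1 - β + α * β * La * Lb]).PosDef := by
  set s := Real.sqrt (α * (1 - α) * β * La * Lb) with hs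
  have hnn : 0 ≤ α * (1 - α) * β * La * Lb := by
    have : 0 ≤ 1 - α := by linarith
    positivity
  have hs2 : s * s = α * (1 - α) * β * La * Lb := Real.mul_self_sqrt hnn
  rw [posDef_iff_dotProduct_mulVec]
  constructor
  · unfold Matrix.IsHermitian
    ext i j
    fin_cases i <;> fin_cases j <;>
      simp [Matrix.conjTranspose, Matrix.one_apply, Matrix.vecHead, Matrix.vecTail]
  · intro x hx
    have hcomp : ∃ i, x i ≠ 0 := by
      by_contra h
      push_neg at h
      exact hx (funext h)
    set a := x 0 with ha
    set b := x 1 with hb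
    set Q : ℝ := x ⬝ᵥ
        (((1 : Matrix (Fin 2) (Fin 2) ℝ) -
        !![1 - α, s; s, 1 - β + α * β * La * Lb]) *ᵥ x) with hQ
    have key : α * Q = (α * a - s * b) ^ 2 + α * β * (1 - La * Lb) * b ^ 2 := by
      rw [hQ]
      simp [Matrix.mulVec, dotProduct, Fin.sum_univ_two, Matrix.one_apply,
        Matrix.sub_apply]
      ring_nf
      nlinarith [hs2]
    have hL : 0 < 1 - La * Lb := by linarith
    have hpos : 0 < (α * a - s * b) ^ 2 + α * β * (1 - La * Lb) * b ^ 2 := by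
      rcases hcomp with ⟨i, hi⟩
      fin_cases i
      · rcases eq_or_ne b 0 with hb0 | hb0
        · have hne : α * a - s * b ≠ 0 := by
            rw [hb0]
            simpa using mul_ne_zero hα0.ne' hi
          have h1 : 0 < (α * a - s * b) ^ 2 := by positivity
          nlinarith [sq_nonneg b, mul_nonneg (mul_nonneg (mul_nonneg hα0.le hβ0.le) hL.le) (sq_nonneg b)]
        · have h2 : 0 < α * β * (1 - La * Lb) * b ^ 2 := by positivity
          nlinarith [sq_nonneg (α * a - s * b)]
      · have hbne : b ≠ 0 := hi
        have h2 : 0 < α * β * (1 - La * Lb) * b ^ 2 := by positivity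
        nlinarith [sq_nonneg (α * a - s * b)]
    have hQpos : 0 < Q := by nlinarith [key, hpos]
    simpa [hQ, dotProduct, star] using hQpos
end

section
/- Let α, β ∈ (0,1] and L_a, L_b ≥ 0 with L_a·L_b < 1. Then the spectral radius of the 2×2 nonnegative matrix C = [[1-α, α L_a], [(1-α)β L_b, (1-β)+αβ L_a L_b]] is strictly less than 1. -/
open Matrix


-- quadratic root bound lemma
lemma quad_root_bound (t d : ℝ) (ht : 0 ≤ t) (hd0 : 0 ≤ d) (hd1 : d < 1)
    (htd : t < 1 + d) (μ : ℂ) (hμ : μ ^ 2 - (t : ℂ) * μ + (d : ℂ) = 0) :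
    ‖μ‖ ≤ max (Real.sqrt d) ((t + Real.sqrt (t ^ 2 - 4 * d)) / 2) := by
  set R := max (Real.sqrt d) ((t + Real.sqrt (t ^ 2 - 4 * d)) / 2) with hR
  have hR0 : 0 ≤ R := le_trans (Real.sqrt_nonneg d) (le_max_left _ _)
  obtain ⟨x, y⟩ := μ
  have hre := congrArg Complex.re hμ
  have him := congrArg Complex.im hμ
  simp [Complex.ext_iff, pow_two, Complex.mul_re, Complex.mul_im] at hre him
  -- hre : x*x - y*y - t*x + d = 0 (some form), him : x*y + y*x - t*y = 0
  by_cases hy : y = 0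
  · subst hy
    have hx2 : x * x - t * x + d = 0 := by linarith [hre]
    have hx0 : 0 ≤ x := by
      by_contra h
      push_neg at h
      nlinarith
    have habs : ‖Complex.mk x 0‖ = x := by
      rw [show Complex.mk x 0 = (x : ℂ) from rfl, Complex.norm_real]
      exact Real.norm_of_nonneg hx0
    rw [habs]
    have hsq : (2 * x - t) ^ 2 = t ^ 2 - 4 * d := by nlinarith
    have h1 : 2 * x - t ≤ Real.sqrt (t ^ 2 - 4 * d) := by
      calc 2 * x - t ≤ |2 * x - t| := le_abs_self _
        _ = Real.sqrt ((2 * x - t) ^ 2) := (Real.sqrt_sq_eq_abs _).symm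
        _ = _ := by rw [hsq]
    have : x ≤ (t + Real.sqrt (t ^ 2 - 4 * d)) / 2 := by linarith
    exact le_trans this (le_max_right _ _)
  · have hx : 2 * x = t := by
      rcases mul_eq_zero.mp (show y * (2 * x - t) = 0 by nlinarith) with h | h
      · exact absurd h hy
      · linarith
    have hnorm : ‖Complex.mk x y‖ = Real.sqrt (x * x + y * y) := by
      rw [Complex.norm_def, Complex.normSq_mk]
    rw [hnorm]
    have : x * x + y * y = d := by nlinarith
    rw [this]
    exact le_max_left _ _

lemma quad_bound_lt_one (t d : ℝ) (ht : 0 ≤ t) (hd0 : 0 ≤ d) (hd1 : d < 1)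
    (htd : t < 1 + d) :
    max (Real.sqrt d) ((t + Real.sqrt (t ^ 2 - 4 * d)) / 2) < 1 := by
  apply max_lt
  · rw [show (1:ℝ) = Real.sqrt 1 by simp]
    exact Real.sqrt_lt_sqrt hd0 hd1
  · have h2t : 0 < 2 - t := by linarith
    have : Real.sqrt (t ^ 2 - 4 * d) < 2 - t := by
      exact (Real.sqrt_lt' h2t).mpr (by nlinarith)
    linarith

/-- For `α, β ∈ (0,1]` and `L_a, L_b ≥ 0` with `L_a L_b < 1`, the spectral radius of
`C = [[1-α, α L_a], [(1-α)β L_b, (1-β)+αβ L_a L_b]]` is strictly less than 1. -/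
theorem stmt_9 (α β La Lb : ℝ)
    (hα0 : 0 < α) (hα1 : α ≤ 1) (hβ0 : 0 < β) (hβ1 : β ≤ 1)
    (hLa : 0 ≤ La) (hLb : 0 ≤ Lb) (hLab : La * Lb < 1) :
    spectralRadius ℂ
        ((!![1 - α, α * La;
             (1 - α) * β * Lb, (1 - β) + α * β * La * Lb]).map
          (Complex.ofReal)) < 1 := by
  set t : ℝ := (1 - α) + ((1 - β) + α * β * La * Lb) with htdef
  set d : ℝ := (1 - α) * (1 - β) with hddef
  have hab : 0 ≤ α * β * La * Lb := by positivity
  have hab2 : 0 < α * β * (1 - La * Lb) :=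
    mul_pos (mul_pos hα0 hβ0) (by linarith)
  have ht : 0 ≤ t := by rw [htdef]; nlinarith
  have hd0 : 0 ≤ d := by rw [hddef]; nlinarith
  have hd1 : d < 1 := by rw [hddef]; nlinarith
  have htd : t < 1 + d := by rw [htdef, hddef]; nlinarith
  set R : ℝ := max (Real.sqrt d) ((t + Real.sqrt (t ^ 2 - 4 * d)) / 2) with hRdef
  have hR0 : 0 ≤ R := le_trans (Real.sqrt_nonneg d) (le_max_left _ _)
  have hR1 : R < 1 := quad_bound_lt_one t d ht hd0 hd1 htd
  have hbound : spectralRadius ℂ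
      ((!![1 - α, α * La;
           (1 - α) * β * Lb, (1 - β) + α * β * La * Lb]).map
        (Complex.ofReal)) ≤ (R.toNNReal : ENNReal) := by
    rw [spectralRadius]
    apply iSup₂_le
    intro μ hμ
    rw [spectrum.mem_iff] at hμ
    have hdet : Matrix.det (algebraMap ℂ (Matrix (Fin 2) (Fin 2) ℂ) μ -
        (!![1 - α, α * La;
           (1 - α) * β * Lb, (1 - β) + α * β * La * Lb]).map (Complex.ofReal)) = 0 := by
      by_contra h
      exact hμ ((Matrix.isUnit_iff_isUnit_det _).mpr (isUnit_iff_ne_zero.mpr h))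
    rw [Matrix.det_fin_two] at hdet
    simp [Matrix.algebraMap_matrix_apply, Matrix.map_apply] at hdet
    have hquad : μ ^ 2 - (t : ℂ) * μ + (d : ℂ) = 0 := by
      rw [htdef, hddef]
      push_cast
      linear_combination hdet
    have := quad_root_bound t d ht hd0 hd1 htd μ hquad
    rw [← hRdef] at this
    have hn : ‖μ‖₊ ≤ R.toNNReal := by
      rw [← NNReal.coe_le_coe, Real.coe_toNNReal _ hR0]
      exact this
    exact_mod_cast hn
  refine lt_of_le_of_lt hbound ?_
  rw [show (1 : ENNReal) = ((1 : NNReal) : ENNReal) from rfl, ENNReal.coe_lt_coe]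
  rw [← NNReal.coe_lt_coe, Real.coe_toNNReal _ hR0]
  exact hR1
end

section
/- Block spectral radius bound: let C be a block matrix with blocks C_{jk} ∈ ℝ^{l_j × l_k}, and suppose ‖C_{jk}‖ ≤ c_{jk} (operator norm) for all j,k. Then ρ(C) ≤ ρ((c_{jk})_{j,k}), where (c_{jk}) is the m×m nonnegative matrix of the bounds. -/
open Matrix

/-- The `ℓ²` operator norm of a rectangular real matrix. -/
noncomputable def euclideanOpNorm {p q : Type*} [Fintype p] [Fintype q] [DecidableEq q]
    (M : Matrix p q ℝ) : ℝ :=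
  ‖LinearMap.toContinuousLinearMap (Matrix.toEuclideanLin M)‖

section Aux

open scoped Matrix.Norms.L2Operator

lemma euclideanOpNorm_eq_norm {p q : Type*} [Fintype p] [Fintype q] [DecidableEq q]
    (M : Matrix p q ℝ) : euclideanOpNorm M = ‖M‖ := rfl

lemma abs_entry_le_l2_opNorm {p q : Type*} [Fintype p] [Fintype q] [DecidableEq q]
    (M : Matrix p q ℝ) (i : p) (j : q) : |M i j| ≤ ‖M‖ := by
  set x : EuclideanSpace ℝ q := EuclideanSpace.single j (1 : ℝ)
  set v : EuclideanSpace ℝ p := (EuclideanSpace.equiv p ℝ).symm (M *ᵥ x)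
  have hv : v i = M i j := by
    show (M *ᵥ x) i = M i j
    simp [x, Matrix.mulVec, dotProduct, EuclideanSpace.single_apply, mul_ite]
  have h1 : |M i j| ≤ ‖v‖ := by
    rw [← hv, EuclideanSpace.norm_eq]
    have h2 : ‖v i‖ ^ 2 ≤ ∑ a, ‖v a‖ ^ 2 :=
      Finset.single_le_sum (f := fun a => ‖v a‖ ^ 2)
        (fun a _ => sq_nonneg _) (Finset.mem_univ i)
    calc |v i| = Real.sqrt (‖v i‖ ^ 2) := by
            rw [Real.sqrt_sq (norm_nonneg _)]; simp
      _ ≤ _ := Real.sqrt_le_sqrt h2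
  have h3 : ‖v‖ ≤ ‖M‖ * ‖x‖ := M.l2_opNorm_mulVec x
  have h4 : ‖x‖ = 1 := by simp [x, EuclideanSpace.norm_single]
  rw [h4, mul_one] at h3
  exact h1.trans h3

lemma blk_one {m : ℕ} {l : Fin m → ℕ} (j k : Fin m) :
    ‖(Matrix.of fun (p : Fin (l j)) (q : Fin (l k)) =>
        (1 : Matrix ((j : Fin m) × Fin (l j)) ((j : Fin m) × Fin (l j)) ℝ) ⟨j, p⟩ ⟨k, q⟩)‖ ≤
      (1 : Matrix (Fin m) (Fin m) ℝ) j k := by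
  rcases eq_or_ne j k with rfl | hjk
  · have : (Matrix.of fun (p : Fin (l j)) (q : Fin (l j)) =>
        (1 : Matrix ((j : Fin m) × Fin (l j)) ((j : Fin m) × Fin (l j)) ℝ) ⟨j, p⟩ ⟨j, q⟩) =
        (1 : Matrix (Fin (l j)) (Fin (l j)) ℝ) := by
      ext p q
      rcases eq_or_ne p q with rfl | hpq
      · simp
      · simp only [of_apply, Matrix.one_apply]
        rw [if_neg (by simp [hpq]), if_neg hpq]
    rw [this, Matrix.one_apply_eq]
    rw [Matrix.cstar_norm_def, _root_.map_one]
    exact ContinuousLinearMap.norm_id_le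
  · have : (Matrix.of fun (p : Fin (l j)) (q : Fin (l k)) =>
        (1 : Matrix ((j : Fin m) × Fin (l j)) ((j : Fin m) × Fin (l j)) ℝ) ⟨j, p⟩ ⟨k, q⟩) = 0 := by
      ext p q
      simp only [of_apply, Matrix.one_apply, Matrix.zero_apply]
      rw [if_neg]
      intro hh
      exact hjk (congrArg Sigma.fst hh)
    rw [this, Matrix.one_apply_ne hjk, norm_zero]

lemma blk_pow_le {m : ℕ} {l : Fin m → ℕ}
    (C : Matrix ((j : Fin m) × Fin (l j)) ((j : Fin m) × Fin (l j)) ℝ)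
    (c : Matrix (Fin m) (Fin m) ℝ) (hc : ∀ j k, 0 ≤ c j k)
    (h : ∀ j k,
      ‖(Matrix.of fun (p : Fin (l j)) (q : Fin (l k)) => C ⟨j, p⟩ ⟨k, q⟩)‖ ≤ c j k)
    (n : ℕ) (j k : Fin m) :
    ‖(Matrix.of fun (p : Fin (l j)) (q : Fin (l k)) => (C ^ n) ⟨j, p⟩ ⟨k, q⟩)‖ ≤ (c ^ n) j k := by
  induction n generalizing j k with
  | zero => simpa using blk_one j k
  | succ n ih =>
    have hblk : (Matrix.of fun (p : Fin (l j)) (q : Fin (l k)) => (C ^ (n+1)) ⟨j, p⟩ ⟨k, q⟩) =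
        ∑ i : Fin m, (Matrix.of fun (p : Fin (l j)) (q : Fin (l i)) => (C ^ n) ⟨j, p⟩ ⟨i, q⟩) *
          (Matrix.of fun (p : Fin (l i)) (q : Fin (l k)) => C ⟨i, p⟩ ⟨k, q⟩) := by
      ext p q
      rw [Matrix.sum_apply]
      simp only [pow_succ, Matrix.mul_apply, of_apply]
      rw [← Finset.univ_sigma_univ, Finset.sum_sigma]
    rw [hblk]
    calc ‖∑ i : Fin m, (Matrix.of fun (p : Fin (l j)) (q : Fin (l i)) => (C ^ n) ⟨j, p⟩ ⟨i, q⟩) *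
          (Matrix.of fun (p : Fin (l i)) (q : Fin (l k)) => C ⟨i, p⟩ ⟨k, q⟩)‖
        ≤ ∑ i : Fin m, ‖(Matrix.of fun (p : Fin (l j)) (q : Fin (l i)) => (C ^ n) ⟨j, p⟩ ⟨i, q⟩) *
          (Matrix.of fun (p : Fin (l i)) (q : Fin (l k)) => C ⟨i, p⟩ ⟨k, q⟩)‖ :=
        norm_sum_le _ _
      _ ≤ ∑ i : Fin m, (c ^ n) j i * c i k := by
        refine Finset.sum_le_sum fun i _ => ?_
        refine (Matrix.l2_opNorm_mul _ _).trans ?_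
        exact mul_le_mul (ih j i) (h i k) (norm_nonneg _)
          (le_trans (norm_nonneg _) (ih j i))
      _ = (c ^ (n+1)) j k := by rw [pow_succ, Matrix.mul_apply]

end Aux

lemma pow_entry_nonneg {m : ℕ} (c : Matrix (Fin m) (Fin m) ℝ) (hc : ∀ j k, 0 ≤ c j k) (n : ℕ) :
    ∀ j k, 0 ≤ (c ^ n) j k := by
  induction n with
  | zero => intro j k; rw [pow_zero, Matrix.one_apply]; split <;> norm_num
  | succ n ih =>
    intro j k
    rw [pow_succ, Matrix.mul_apply]
    exact Finset.sum_nonneg fun i _ => mul_nonneg (ih j i) (hc i k)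

section Main

attribute [local instance] Matrix.linftyOpNormedRing Matrix.linftyOpNormedAlgebra
  Matrix.linftyOpNormedSpace

open Filter ENNReal NNReal Topology

/-- Block spectral radius bound: if each block of `C` has operator norm bounded by the
corresponding entry of the nonnegative matrix `c`, then `ρ(C) ≤ ρ(c)`. -/
theorem stmt_11 {m : ℕ} (l : Fin m → ℕ)
    (C : Matrix ((j : Fin m) × Fin (l j)) ((j : Fin m) × Fin (l j)) ℝ)
    (c : Matrix (Fin m) (Fin m) ℝ) (hc : ∀ j k, 0 ≤ c j k)
    (h : ∀ j k,
      euclideanOpNorm (Matrix.of fun (p : Fin (l j)) (q : Fin (l k)) => C ⟨j, p⟩ ⟨k, q⟩) ≤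
        c j k) :
    spectralRadius ℂ (C.map (Complex.ofReal)) ≤ spectralRadius ℂ (c.map (Complex.ofReal)) := by
  -- entrywise bound for powers of `C`
  have hentry : ∀ (n : ℕ) (j k : Fin m) (p : Fin (l j)) (q : Fin (l k)),
      |(C ^ n) ⟨j, p⟩ ⟨k, q⟩| ≤ (c ^ n) j k := by
    intro n j k p q
    have := abs_entry_le_l2_opNorm
      (Matrix.of fun (p : Fin (l j)) (q : Fin (l k)) => (C ^ n) ⟨j, p⟩ ⟨k, q⟩) p q
    exact this.trans (blk_pow_le C c hc (fun j k => h j k) n j k)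
  set L : ℝ≥0 := (∑ k : Fin m, (l k : ℝ≥0)) + 1 with hL
  have hL0 : L ≠ 0 := by positivity
  -- the norm comparison
  have hmap : ∀ n : ℕ, (C.map Complex.ofReal) ^ n = (C ^ n).map Complex.ofReal := by
    intro n
    have := map_pow (Complex.ofRealHom.mapMatrix) C n
    exact this.symm
  have hmapc : ∀ n : ℕ, (c.map Complex.ofReal) ^ n = (c ^ n).map Complex.ofReal := by
    intro n
    have := map_pow (Complex.ofRealHom.mapMatrix) c n
    exact this.symm
  have hnorm : ∀ n : ℕ, ‖(C.map Complex.ofReal) ^ n‖₊ ≤ L * ‖(c.map Complex.ofReal) ^ n‖₊ := by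
    intro n
    rw [hmap, hmapc, Matrix.linfty_opNNNorm_def, Matrix.linfty_opNNNorm_def]
    refine Finset.sup_le fun x _ => ?_
    obtain ⟨j, p⟩ := x
    have hrow : ∀ k : Fin m, ‖(c ^ n) j k‖₊ ≤ ∑ i : Fin m, ‖((c ^ n).map Complex.ofReal) j i‖₊ := by
      intro k
      refine le_trans ?_ (Finset.single_le_sum
        (f := fun i => ‖((c ^ n).map Complex.ofReal) j i‖₊) (fun _ _ => zero_le)
        (Finset.mem_univ k))
      simp [Matrix.map_apply]
    calc ∑ y : (j : Fin m) × Fin (l j), ‖((C ^ n).map Complex.ofReal) ⟨j, p⟩ y‖₊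
        = ∑ k : Fin m, ∑ q : Fin (l k), ‖((C ^ n).map Complex.ofReal) ⟨j, p⟩ ⟨k, q⟩‖₊ := by
          rw [← Finset.univ_sigma_univ, Finset.sum_sigma]
      _ ≤ ∑ k : Fin m, ∑ _q : Fin (l k), ‖(c ^ n) j k‖₊ := by
          refine Finset.sum_le_sum fun k _ => Finset.sum_le_sum fun q _ => ?_
          simp only [Matrix.map_apply, Complex.nnnorm_real]
          have h1 := hentry n j k p q
          have h2 : 0 ≤ (c ^ n) j k := pow_entry_nonneg c hc n j k
          rw [← NNReal.coe_le_coe]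
          simpa [Real.norm_eq_abs, abs_of_nonneg h2] using h1
      _ = ∑ k : Fin m, (l k : ℝ≥0) * ‖(c ^ n) j k‖₊ := by
          simp [Finset.sum_const, nsmul_eq_mul]
      _ ≤ ∑ k : Fin m, L * ‖(c ^ n) j k‖₊ := by
          refine Finset.sum_le_sum fun k _ => ?_
          refine mul_le_mul_of_nonneg_right ?_ (zero_le)
          rw [hL]
          exact le_trans (Finset.single_le_sum (f := fun k : Fin m => (l k : ℝ≥0))
            (fun _ _ => zero_le) (Finset.mem_univ k)) (le_add_of_nonneg_right (zero_le))
      _ = L * ∑ k : Fin m, ‖(c ^ n) j k‖₊ := by rw [Finset.mul_sum]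
      _ ≤ L * Finset.univ.sup fun i : Fin m =>
            ∑ k : Fin m, ‖((c ^ n).map Complex.ofReal) i k‖₊ := by
          refine mul_le_mul_of_nonneg_left ?_ (zero_le)
          refine le_trans (le_of_eq ?_) (Finset.le_sup (Finset.mem_univ j))
          simp [Matrix.map_apply]
  -- Gelfand's formula on both sides
  have hT1 := spectrum.pow_nnnorm_pow_one_div_tendsto_nhds_spectralRadius (C.map Complex.ofReal)
  have hT2 := spectrum.pow_nnnorm_pow_one_div_tendsto_nhds_spectralRadius (c.map Complex.ofReal)
  have hLlim : Tendsto (fun n : ℕ => ((L : ℝ≥0∞) ^ (1 / (n : ℝ)))) atTop (𝓝 1) := by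
    have h0 : Tendsto (fun n : ℕ => (1 / (n : ℝ))) atTop (𝓝 0) :=
      tendsto_one_div_atTop_nhds_zero_nat
    have : Tendsto (fun n : ℕ => (L ^ (1 / (n : ℝ)) : ℝ≥0)) atTop (𝓝 (L ^ (0 : ℝ))) :=
      Filter.Tendsto.nnrpow tendsto_const_nhds h0 (Or.inl hL0)
    rw [NNReal.rpow_zero] at this
    have hcoe : Tendsto (fun n : ℕ => ((L ^ (1 / (n : ℝ)) : ℝ≥0) : ℝ≥0∞)) atTop (𝓝 1) := by
      have := ENNReal.tendsto_coe.2 this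
      rwa [ENNReal.coe_one] at this
    refine hcoe.congr fun n => ?_
    rw [ENNReal.coe_rpow_of_ne_zero hL0]
  have hT2' : Tendsto (fun n : ℕ => (L : ℝ≥0∞) ^ (1 / (n : ℝ)) *
      (‖(c.map Complex.ofReal) ^ n‖₊ : ℝ≥0∞) ^ (1 / (n : ℝ))) atTop
      (𝓝 (1 * spectralRadius ℂ (c.map Complex.ofReal))) :=
    ENNReal.Tendsto.mul hLlim (Or.inl one_ne_zero) hT2 (Or.inr one_ne_top)
  rw [one_mul] at hT2'
  refine le_of_tendsto_of_tendsto' hT1 hT2' fun n => ?_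
  have hle : (‖(C.map Complex.ofReal) ^ n‖₊ : ℝ≥0∞) ≤
      (L : ℝ≥0∞) * (‖(c.map Complex.ofReal) ^ n‖₊ : ℝ≥0∞) := by
    rw [← ENNReal.coe_mul]
    exact_mod_cast hnorm n
  calc (‖(C.map Complex.ofReal) ^ n‖₊ : ℝ≥0∞) ^ (1 / (n : ℝ))
      ≤ ((L : ℝ≥0∞) * (‖(c.map Complex.ofReal) ^ n‖₊ : ℝ≥0∞)) ^ (1 / (n : ℝ)) :=
        ENNReal.rpow_le_rpow hle (by positivity)
    _ = (L : ℝ≥0∞) ^ (1 / (n : ℝ)) *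
        (‖(c.map Complex.ofReal) ^ n‖₊ : ℝ≥0∞) ^ (1 / (n : ℝ)) :=
        ENNReal.mul_rpow_of_nonneg _ _ (by positivity)

end Main
end

section
/- Let f: ℝ^d → ℝ^d be a continuously differentiable diffeomorphism onto its image such that for every fixed x^H, the restriction x^O ↦ f^O(x^O; x^H) is a diffeomorphism from ℝ^{d^O} onto an open set. Then with g = f^{-1}, for every fixed y^O the map y^H ↦ g^H(y^H; y^O) has an invertible Jacobian at every point, namely G^{HH} = (J^{HH} - J^{HO}(J^{OO})^{-1} J^{OH})^{-1} evaluated at the corresponding point. -/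
open Matrix

/-- The Jacobian matrix of a map `f : (ι → ℝ) → (ι → ℝ)` at `x`. -/
noncomputable def jacobianMatrix {ι : Type*} [Fintype ι] [DecidableEq ι]
    (f : (ι → ℝ) → (ι → ℝ)) (x : ι → ℝ) : Matrix ι ι ℝ :=
  LinearMap.toMatrix' (fderiv ℝ f x).toLinearMap

/-- Inclusion of the `H`-coordinates, extended by zero. -/
def inclHL (dO dH : ℕ) : (Fin dH → ℝ) →ₗ[ℝ] ((Fin dO ⊕ Fin dH) → ℝ) where
  toFun v := Sum.elim 0 v
  map_add' u v := by funext k; cases k <;> simp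
  map_smul' c v := by funext k; cases k <;> simp

/-- If `f` is a `C¹` diffeomorphism (with inverse `g`) whose Jacobian `J` and whose
`OO`-block `J^{OO}` are invertible everywhere, then for every fixed `y^O` the map
`y^H ↦ g^H(y^H; y^O)` has invertible Jacobian
`G^{HH} = (J^{HH} - J^{HO}(J^{OO})⁻¹J^{OH})⁻¹` at every point. -/
theorem stmt_13 {dO dH : ℕ}
    (f g : ((Fin dO ⊕ Fin dH) → ℝ) → ((Fin dO ⊕ Fin dH) → ℝ))
    (hf : ContDiff ℝ 1 f) (hg : ContDiff ℝ 1 g)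
    (hgf : Function.LeftInverse g f) (hfg : Function.RightInverse g f)
    (hJ : ∀ x, IsUnit (jacobianMatrix f x).det)
    (hJOO : ∀ x, IsUnit ((jacobianMatrix f x).toBlocks₁₁).det) :
    ∀ x : (Fin dO ⊕ Fin dH) → ℝ,
      IsUnit ((jacobianMatrix g (f x)).toBlocks₂₂).det ∧
      (jacobianMatrix g (f x)).toBlocks₂₂ =
        ((jacobianMatrix f x).toBlocks₂₂ -
          (jacobianMatrix f x).toBlocks₂₁ * ((jacobianMatrix f x).toBlocks₁₁)⁻¹ *
            (jacobianMatrix f x).toBlocks₁₂)⁻¹ ∧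
      HasFDerivAt
        (fun yH : Fin dH → ℝ => fun j : Fin dH =>
          g (Sum.elim (fun i => f x (Sum.inl i)) yH) (Sum.inr j))
        (LinearMap.toContinuousLinearMap
          (Matrix.mulVecLin ((jacobianMatrix g (f x)).toBlocks₂₂)))
        (fun j : Fin dH => f x (Sum.inr j)) := by
  intro x
  have hfd : DifferentiableAt ℝ f x := (hf.differentiable one_ne_zero) x
  have hgd : DifferentiableAt ℝ g (f x) := (hg.differentiable one_ne_zero) (f x)
  -- chain rule: fderiv g (f x) ∘ fderiv f x = id
  have h1 : HasFDerivAt (g ∘ f) ((fderiv ℝ g (f x)).comp (fderiv ℝ f x)) x :=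
    hgd.hasFDerivAt.comp x hfd.hasFDerivAt
  rw [show g ∘ f = id from funext hgf] at h1
  have hcomp : (fderiv ℝ g (f x)).comp (fderiv ℝ f x) = ContinuousLinearMap.id ℝ _ :=
    h1.unique (hasFDerivAt_id x)
  set J := jacobianMatrix f x with hJdef
  set G := jacobianMatrix g (f x) with hGdef
  have hGJ : G * J = 1 := by
    rw [hGdef, hJdef, jacobianMatrix, jacobianMatrix, ← LinearMap.toMatrix'_comp,
      ← ContinuousLinearMap.toLinearMap_comp, hcomp]
    simp
  -- block structure
  set A := J.toBlocks₁₁ with hA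
  set B := J.toBlocks₁₂ with hB
  set C := J.toBlocks₂₁ with hC
  set D := J.toBlocks₂₂ with hD
  have hJb : J = fromBlocks A B C D := (fromBlocks_toBlocks J).symm
  haveI iA : Invertible A := A.invertibleOfIsUnitDet (hJOO x)
  haveI iFB : Invertible (fromBlocks A B C D) :=
    ((fromBlocks A B C D).invertibleOfIsUnitDet (by rw [← hJb]; exact hJ x))
  haveI iS : Invertible (D - C * ⅟A * B) := invertibleOfFromBlocks₁₁Invertible A B C D
  have hGinv : G = (fromBlocks A B C D)⁻¹ := by
    rw [← hJb]
    exact (inv_eq_left_inv hGJ).symm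
  have hGblocks : G = fromBlocks (⅟A + ⅟A * B * ⅟(D - C * ⅟A * B) * C * ⅟A)
      (-(⅟A * B * ⅟(D - C * ⅟A * B))) (-(⅟(D - C * ⅟A * B) * C * ⅟A))
      (⅟(D - C * ⅟A * B)) := by
    rw [hGinv, ← invOf_eq_nonsing_inv, invOf_fromBlocks₁₁_eq]
  have hG22 : G.toBlocks₂₂ = ⅟(D - C * ⅟A * B) := by
    rw [hGblocks, toBlocks_fromBlocks₂₂]
  refine ⟨?_, ?_, ?_⟩
  · rw [hG22]
    exact isUnit_det_of_invertible _
  · rw [hG22, invOf_eq_nonsing_inv, invOf_eq_nonsing_inv]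
  · -- the derivative statement
    set c : Fin dO → ℝ := fun i => f x (Sum.inl i) with hc
    set yH₀ : Fin dH → ℝ := fun j => f x (Sum.inr j) with hyH₀
    have hpt : Sum.elim c yH₀ = f x := by funext k; cases k <;> rfl
    set L : (Fin dH → ℝ) →L[ℝ] ((Fin dO ⊕ Fin dH) → ℝ) :=
      LinearMap.toContinuousLinearMap (inclHL dO dH) with hL
    set P : ((Fin dO ⊕ Fin dH) → ℝ) →L[ℝ] (Fin dH → ℝ) :=
      LinearMap.toContinuousLinearMap (LinearMap.funLeft ℝ ℝ Sum.inr) with hP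
    have hstep : HasFDerivAt (fun yH : Fin dH → ℝ => Sum.elim c yH) L yH₀ := by
      have heq : (fun yH : Fin dH → ℝ => Sum.elim c yH)
          = fun yH => Sum.elim c (0 : Fin dH → ℝ) + L yH := by
        funext yH k
        cases k <;> simp [hL, inclHL]
      rw [heq]
      exact (L.hasFDerivAt).const_add _
    have hg' : HasFDerivAt g (fderiv ℝ g (f x)) (Sum.elim c yH₀) := by
      rw [hpt]; exact hgd.hasFDerivAt
    have h2 : HasFDerivAt (fun yH : Fin dH → ℝ => g (Sum.elim c yH))
        ((fderiv ℝ g (f x)).comp L) yH₀ := hg'.comp yH₀ hstep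
    have h3 : HasFDerivAt (fun yH : Fin dH → ℝ => P (g (Sum.elim c yH)))
        (P.comp ((fderiv ℝ g (f x)).comp L)) yH₀ := (P.hasFDerivAt).comp yH₀ h2
    have hfun : (fun yH : Fin dH → ℝ => P (g (Sum.elim c yH)))
        = fun yH : Fin dH → ℝ => fun j : Fin dH => g (Sum.elim c yH) (Sum.inr j) := rfl
    rw [hfun] at h3
    have hder : P.comp ((fderiv ℝ g (f x)).comp L)
        = LinearMap.toContinuousLinearMap (Matrix.mulVecLin (G.toBlocks₂₂)) := by
      have hGapp : ∀ w, fderiv ℝ g (f x) w = G.mulVec w := by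
        intro w
        rw [hGdef, jacobianMatrix]
        rw [show (LinearMap.toMatrix' (fderiv ℝ g (f x)).toLinearMap).mulVec w
            = Matrix.toLin' (LinearMap.toMatrix' (fderiv ℝ g (f x)).toLinearMap) w from
          (Matrix.toLin'_apply _ _).symm]
        rw [Matrix.toLin'_toMatrix']
        rfl
      refine ContinuousLinearMap.ext fun v => funext fun j => ?_
      simp only [ContinuousLinearMap.comp_apply]
      rw [show (L v) = Sum.elim (0 : Fin dO → ℝ) v from rfl]
      rw [show P (fderiv ℝ g (f x) (Sum.elim (0 : Fin dO → ℝ) v))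
          = fun j => fderiv ℝ g (f x) (Sum.elim (0 : Fin dO → ℝ) v) (Sum.inr j) from rfl]
      rw [hGapp]
      simp [Matrix.mulVec, dotProduct, Fintype.sum_sum_type, Matrix.toBlocks₂₂]
    rw [hder] at h3
    exact h3
end
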